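/- For every q > 0 there exists a unique real t = t(q) such that Σ_{j=1}^{∞} 2^{-t j − q(2^j − 1)} = 1. Moreover the function q ↦ t(q) is strictly decreasing on (0, ∞). -/

import Mathlib

open Filter Real

private noncomputable def spTerm (q t : ℝ) (j : ℕ) : ℝ :=
  (2 : ℝ) ^ (-(t * ((j : ℝ) + 1)) - q * ((2 : ℝ) ^ (j + 1) - 1))

private lemma spTerm_pos (q t : ℝ) (j : ℕ) : 0 < spTerm q t j :=
  Real.rpow_pos_of_pos two_pos _

private lemma sp_summable (q t : ℝ) (hq : 0 < q) : Summable (spTerm q t) := by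
  apply summable_of_ratio_test_tendsto_lt_one (l := 0) zero_lt_one
    (Eventually.of_forall fun n => (spTerm_pos q t n).ne')
  have hratio : ∀ n : ℕ, ‖spTerm q t (n + 1)‖ / ‖spTerm q t n‖
      = (2 : ℝ) ^ (-t - q * (2 : ℝ) ^ (n + 1)) := by
    intro n
    rw [Real.norm_of_nonneg (spTerm_pos q t (n+1)).le,
      Real.norm_of_nonneg (spTerm_pos q t n).le, spTerm, spTerm,
      ← Real.rpow_sub two_pos]
    congr 1
    push_cast
    ring_nf
  rw [show (fun n : ℕ => ‖spTerm q t (n + 1)‖ / ‖spTerm q t n‖)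
      = fun n : ℕ => (2 : ℝ) ^ (-t - q * (2 : ℝ) ^ (n + 1)) from funext hratio]
  have hexp : Tendsto (fun n : ℕ => -t - q * (2 : ℝ) ^ (n + 1)) atTop atBot := by
    have h1 : Tendsto (fun n : ℕ => (2 : ℝ) ^ (n + 1)) atTop atTop := by
      have := (tendsto_pow_atTop_atTop_of_one_lt (one_lt_two (α := ℝ))).comp
        (tendsto_add_atTop_nat 1)
      exact this
    have h2 : Tendsto (fun n : ℕ => q * (2 : ℝ) ^ (n + 1)) atTop atTop :=
      h1.const_mul_atTop hq
    have h3 : Tendsto (fun n : ℕ => -(q * (2 : ℝ) ^ (n + 1))) atTop atBot :=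
      tendsto_neg_atTop_atBot.comp h2
    have := tendsto_atBot_add_const_left atTop (-t) h3
    simpa [sub_eq_add_neg] using this
  have : Tendsto (fun x : ℝ => (2 : ℝ) ^ x) atBot (nhds 0) := by
    have : Tendsto (fun x : ℝ => Real.exp (Real.log 2 * x)) atBot (nhds 0) :=
      Real.tendsto_exp_atBot.comp ((tendsto_const_mul_atBot_of_pos
        (Real.log_pos one_lt_two)).mpr tendsto_id)
    refine this.congr fun x => ?_
    rw [Real.rpow_def_of_pos two_pos]
  exact this.comp hexp

/-- strictly antitone in t -/
private lemma sp_anti_t (q : ℝ) (hq : 0 < q) {t₁ t₂ : ℝ} (h : t₁ < t₂) :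
    ∑' j, spTerm q t₂ j < ∑' j, spTerm q t₁ j := by
  refine Summable.tsum_lt_tsum_of_nonneg (i := 0) (fun j => (spTerm_pos q t₂ j).le)
    (fun j => ?_) ?_ (sp_summable q t₁ hq)
  · apply (Real.rpow_le_rpow_left_iff one_lt_two).mpr
    have hj : (0 : ℝ) < (j : ℝ) + 1 := by positivity
    nlinarith [mul_le_mul_of_nonneg_right h.le hj.le]
  · apply (Real.rpow_lt_rpow_left_iff one_lt_two).mpr
    norm_num
    linarith

/-- strictly antitone in q -/
private lemma sp_anti_q (t : ℝ) {q₁ q₂ : ℝ} (hq₁ : 0 < q₁) (h : q₁ < q₂) :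
    ∑' j, spTerm q₂ t j < ∑' j, spTerm q₁ t j := by
  refine Summable.tsum_lt_tsum_of_nonneg (i := 0) (fun j => (spTerm_pos q₂ t j).le)
    (fun j => ?_) ?_ (sp_summable q₁ t hq₁)
  · apply (Real.rpow_le_rpow_left_iff one_lt_two).mpr
    have hj : (1 : ℝ) ≤ (2 : ℝ) ^ (j + 1) := one_le_pow₀ one_le_two
    nlinarith
  · apply (Real.rpow_lt_rpow_left_iff one_lt_two).mpr
    norm_num
    linarith

private lemma sp_le_one (q : ℝ) (hq : 0 < q) : ∑' j, spTerm q 2 j < 1 := by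
  have hle : ∀ j : ℕ, spTerm q 2 j ≤ ((4 : ℝ)⁻¹) ^ (j + 1) := by
    intro j
    have h1 : ((4 : ℝ)⁻¹) ^ (j + 1) = (2 : ℝ) ^ (-(2 * ((j : ℝ) + 1))) := by
      rw [show (-(2 * ((j : ℝ) + 1))) = (-2 : ℝ) * ((j + 1 : ℕ) : ℝ) by push_cast; ring,
        Real.rpow_mul (by norm_num), Real.rpow_natCast]
      norm_num
    rw [h1, spTerm]
    apply (Real.rpow_le_rpow_left_iff one_lt_two).mpr
    have hj : (1 : ℝ) ≤ (2 : ℝ) ^ (j + 1) := one_le_pow₀ one_le_two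
    nlinarith
  have hsum4 : Summable (fun j : ℕ => ((4 : ℝ)⁻¹) ^ (j + 1)) := by
    apply Summable.comp_injective (summable_geometric_of_lt_one (by norm_num) (by norm_num))
      (add_left_injective 1)
  calc ∑' j, spTerm q 2 j ≤ ∑' j : ℕ, ((4 : ℝ)⁻¹) ^ (j + 1) :=
        Summable.tsum_le_tsum hle (sp_summable q 2 hq) hsum4
    _ = (4 : ℝ)⁻¹ * ∑' j : ℕ, ((4 : ℝ)⁻¹) ^ j := by
        simp_rw [pow_succ']; exact tsum_mul_left
    _ < 1 := by
        rw [tsum_geometric_of_lt_one (by norm_num) (by norm_num)]; norm_num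

private lemma sp_ge_one (q : ℝ) (hq : 0 < q) : 1 < ∑' j, spTerm q (-(q + 1)) j := by
  have h0 : spTerm q (-(q + 1)) 0 = 2 := by
    simp only [spTerm]
    norm_num
  have := Summable.le_tsum (sp_summable q (-(q + 1)) hq) 0
    (fun j _ => (spTerm_pos q (-(q + 1)) j).le)
  rw [h0] at this
  linarith

private lemma sp_continuousOn (q : ℝ) (hq : 0 < q) :
    ContinuousOn (fun t => ∑' j, spTerm q t j) (Set.Icc (-(q + 1)) 2) := by
  apply continuousOn_tsum (u := spTerm q (-(q + 1)))
  · intro j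
    simp only [spTerm]
    apply Continuous.continuousOn
    exact Continuous.rpow continuous_const (by fun_prop) (fun x => Or.inl two_ne_zero)
  · exact sp_summable q _ hq
  · intro j t ht
    rw [Real.norm_of_nonneg (spTerm_pos q t j).le]
    apply (Real.rpow_le_rpow_left_iff one_lt_two).mpr
    have hj : (0 : ℝ) ≤ (j : ℝ) + 1 := by positivity
    have := ht.1
    nlinarith [mul_le_mul_of_nonneg_right this hj]

theorem saint_petersburg_stmt7 :
    (∀ q : ℝ, 0 < q → ∃! t : ℝ,
      ∑' j : ℕ, (2 : ℝ) ^ (-(t * ((j : ℝ) + 1)) - q * ((2 : ℝ) ^ (j + 1) - 1)) = 1) ∧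
    (∀ q₁ q₂ t₁ t₂ : ℝ, 0 < q₁ → q₁ < q₂ →
      ∑' j : ℕ, (2 : ℝ) ^ (-(t₁ * ((j : ℝ) + 1)) - q₁ * ((2 : ℝ) ^ (j + 1) - 1)) = 1 →
      ∑' j : ℕ, (2 : ℝ) ^ (-(t₂ * ((j : ℝ) + 1)) - q₂ * ((2 : ℝ) ^ (j + 1) - 1)) = 1 →
      t₂ < t₁) := by
  constructor
  · intro q hq
    obtain ⟨t, ht, hft⟩ := intermediate_value_Icc'
      (by linarith : (-(q + 1) : ℝ) ≤ 2) (sp_continuousOn q hq)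
      ⟨(sp_le_one q hq).le, (sp_ge_one q hq).le⟩
    refine ⟨t, hft, fun t' ht' => ?_⟩
    have hft2 : ∑' j, spTerm q t j = 1 := hft
    have ht'' : ∑' j, spTerm q t' j = 1 := ht'
    rcases lt_trichotomy t' t with h | h | h
    · exfalso
      have := sp_anti_t q hq h
      rw [ht'', hft2] at this; exact lt_irrefl _ this
    · exact h
    · exfalso
      have := sp_anti_t q hq h
      rw [ht'', hft2] at this; exact lt_irrefl _ this
  · intro q₁ q₂ t₁ t₂ hq₁ hq h1 h2
    by_contra hcon
    push_neg at hcon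
    have h1' : ∑' j, spTerm q₁ t₁ j = 1 := h1
    have h2' : ∑' j, spTerm q₂ t₂ j = 1 := h2
    have key : (1 : ℝ) < ∑' j, spTerm q₁ t₂ j := by
      have := sp_anti_q t₂ hq₁ hq
      rw [h2'] at this
      exact this
    have hle : ∑' j, spTerm q₁ t₂ j ≤ 1 := by
      rcases eq_or_lt_of_le hcon with h | h
      · rw [← h]; exact le_of_eq h1'
      · exact le_of_lt (by rw [← h1']; exact sp_anti_t q₁ hq₁ h)
    linarith
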